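/- Approximation guarantee for local search on approximately submodular functions (Theorem 1 of the paper): let F : Finset V → ℝ be a nonnegative set function on a finite set V, let C ⊆ V be a maximizer of F over all subsets of V, and let S ⊆ V be a local optimum of F. Then 2·F(S) + F(V \ S) ≥ F(C) + ξ · λ_F(V, 2), where ξ = C(|S \ C|, 2) + C(|C \ S|, 2) + |V \ (S ∪ C)| · |S| + |C \ S| · |S ∩ C| and C(n, 2) = n(n−1)/2 denotes the binomial coefficient. -/
import Mathlib


open Finset

variable {V : Type*} [Fintype V] [DecidableEq V]

/-- The marginal gain `F_S(A) = F(A ∪ S) − F(A)` generalizes `F_x(A)` via `S = {x}`.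
The submodularity index (SmI) of `F` for a set `L ⊆ V` and cardinality `k` is the
minimum of `∑ x ∈ S, F_x(A) − F_S(A)` over all pairs `(S, A)` with `A ⊆ L`,
`S ∩ A = ∅`, and `|S| ≤ k`. -/
noncomputable def smI (F : Finset V → ℝ) (L : Finset V) (k : ℕ) : ℝ :=
  (Finset.univ.filter (fun p : Finset V × Finset V =>
      p.2 ⊆ L ∧ p.1 ∩ p.2 = ∅ ∧ p.1.card ≤ k)).inf'
    ⟨(∅, ∅), by simp⟩
    (fun p => (∑ x ∈ p.1, (F (p.2 ∪ {x}) - F p.2)) - (F (p.2 ∪ p.1) - F p.2))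

/-- A set `S ⊆ V` is a local optimum of `F` if `F(S) ≥ F(S \ {a})` for every `a ∈ S`
and `F(S) ≥ F(S ∪ {a})` for every `a ∉ S`. -/
def IsLocalOptimum (F : Finset V → ℝ) (S : Finset V) : Prop :=
  (∀ a ∈ S, F (S \ {a}) ≤ F S) ∧ (∀ a ∉ S, F (S ∪ {a}) ≤ F S)

lemma smI_le (F : Finset V → ℝ) (T A : Finset V) (h1 : T ∩ A = ∅) (h2 : T.card ≤ 2) :
    smI F Finset.univ 2 ≤ (∑ x ∈ T, (F (A ∪ {x}) - F A)) - (F (A ∪ T) - F A) := by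
  apply Finset.inf'_le (b := (T, A))
  simp [h1, h2]

lemma pair_step (F : Finset V → ℝ) (A : Finset V) (x y : V)
    (hx : x ∉ A) (hy : y ∉ A) (hxy : x ≠ y) :
    F (A ∪ {y} ∪ {x}) - F (A ∪ {y}) ≤ F (A ∪ {x}) - F A - smI F Finset.univ 2 := by
  have h1 : ({x, y} : Finset V) ∩ A = ∅ := by
    ext a; simp; rintro (rfl | rfl) <;> tauto
  have h2 : ({x, y} : Finset V).card ≤ 2 := card_insert_le _ _ |>.trans (by simp)
  have key := smI_le F {x, y} A h1 h2
  rw [Finset.sum_insert (by simp [hxy]), Finset.sum_singleton] at key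
  have e : A ∪ {x, y} = A ∪ {y} ∪ {x} := by ext a; simp <;> tauto
  rw [e] at key
  linarith

/-- Marginal gain of a single element over a larger base. -/
lemma marg_mono (F : Finset V → ℝ) (x : V) (A : Finset V) :
    ∀ B : Finset V, x ∉ A → x ∉ B → Disjoint A B →
      F (A ∪ B ∪ {x}) - F (A ∪ B) ≤
        F (A ∪ {x}) - F A - (B.card : ℝ) * smI F Finset.univ 2 := by
  intro B
  induction B using Finset.induction_on with
  | empty => intro _ _ _; simp
  | @insert y B hyB ih =>
    intro hxA hxB hd
    have hxy : x ≠ y := by simp at hxB; tauto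
    have hxB' : x ∉ B := by simp at hxB; tauto
    have hyA : y ∉ A := by
      intro h; exact (Finset.disjoint_left.mp hd h) (by simp)
    have hdAB : Disjoint A B := hd.mono_right (by simp [Finset.subset_insert])
    have hyAB : y ∉ A ∪ B := by simp [hyA, hyB]
    have hxAB : x ∉ A ∪ B := by simp [hxA, hxB']
    have hp := pair_step F (A ∪ B) x y hxAB hyAB hxy
    have hih := ih hxA hxB' hdAB
    have e1 : A ∪ insert y B = A ∪ B ∪ {y} := by ext a; simp <;> tauto
    rw [e1, Finset.card_insert_of_notMem hyB]
    push_cast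
    linarith

/-- Marginal gain of a set of elements over a larger base. -/
lemma marg_mono_set (F : Finset V → ℝ) (A B : Finset V) :
    ∀ T : Finset V, Disjoint T A → Disjoint T B → Disjoint A B →
      F (A ∪ B ∪ T) - F (A ∪ B) ≤
        F (A ∪ T) - F A - (T.card : ℝ) * (B.card : ℝ) * smI F Finset.univ 2 := by
  intro T
  induction T using Finset.induction_on with
  | empty => intro _ _ _; simp
  | @insert x T hxT ih =>
    intro hTA hTB hAB
    have hxA : x ∉ A := by
      intro h; exact (Finset.disjoint_left.mp hTA (by simp)) h
    have hxB : x ∉ B := by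
      intro h; exact (Finset.disjoint_left.mp hTB (by simp)) h
    have hTA' : Disjoint T A := hTA.mono_left (by simp [Finset.subset_insert])
    have hTB' : Disjoint T B := hTB.mono_left (by simp [Finset.subset_insert])
    have hih := ih hTA' hTB' hAB
    have hxAT : x ∉ A ∪ T := by simp [hxA, hxT]
    have hdATB : Disjoint (A ∪ T) B := by
      rw [Finset.disjoint_union_left]; exact ⟨hAB, hTB'⟩
    have hm := marg_mono F x (A ∪ T) B hxAT hxB hdATB
    have e1 : A ∪ B ∪ insert x T = A ∪ T ∪ B ∪ {x} := by ext a; simp <;> tauto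
    have e2 : A ∪ B ∪ T = A ∪ T ∪ B := by ext a; simp <;> tauto
    have e3 : A ∪ insert x T = A ∪ T ∪ {x} := by ext a; simp <;> tauto
    rw [e1, e3, Finset.card_insert_of_notMem hxT]
    rw [e2] at hih
    push_cast
    linarith

/-- Approximate submodularity with SmI penalty. -/
lemma approx_submod (F : Finset V → ℝ) (X Y : Finset V) :
    F (X ∪ Y) + F (X ∩ Y) + ((X \ Y).card : ℝ) * ((Y \ X).card : ℝ) * smI F Finset.univ 2
      ≤ F X + F Y := by
  have h := marg_mono_set F (X ∩ Y) (Y \ X) (X \ Y)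
    (by rw [Finset.disjoint_left]; intro a; simp; tauto)
    (by rw [Finset.disjoint_left]; intro a; simp; tauto)
    (by rw [Finset.disjoint_left]; intro a; simp; tauto)
  have e1 : X ∩ Y ∪ (Y \ X) ∪ (X \ Y) = X ∪ Y := by ext a; simp <;> tauto
  have e2 : X ∩ Y ∪ (Y \ X) = Y := by ext a; simp <;> tauto
  have e3 : X ∩ Y ∪ (X \ Y) = X := by ext a; simp <;> tauto
  rw [e1, e2, e3] at h
  linarith

lemma claimA (F : Finset V → ℝ) (S : Finset V)
    (hloc : ∀ a ∉ S, F (S ∪ {a}) ≤ F S) :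
    ∀ T : Finset V, Disjoint S T →
      F (S ∪ T) ≤ F S - ((T.card.choose 2 : ℕ) : ℝ) * smI F Finset.univ 2 := by
  intro T
  induction T using Finset.induction_on with
  | empty => intro _; simp
  | @insert x T hxT ih =>
    intro hd
    have hxS : x ∉ S := by
      intro h; exact (Finset.disjoint_right.mp hd (by simp)) h
    have hd' : Disjoint S T := hd.mono_right (by simp [Finset.subset_insert])
    have hih := ih hd'
    have hm := marg_mono F x S T hxS hxT hd'
    have hl := hloc x hxS
    have e1 : S ∪ insert x T = S ∪ T ∪ {x} := by ext a; simp <;> tauto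
    rw [e1, Finset.card_insert_of_notMem hxT]
    have hch : (((T.card + 1).choose 2 : ℕ) : ℝ) = ((T.card.choose 2 : ℕ) : ℝ) + T.card := by
      rw [Nat.choose_succ_succ, Nat.choose_one_right]; push_cast; ring
    rw [hch]
    linarith

lemma claimB (F : Finset V → ℝ) (S : Finset V)
    (hloc : ∀ a ∈ S, F (S \ {a}) ≤ F S) :
    ∀ T : Finset V, T ⊆ S →
      F (S \ T) ≤ F S - ((T.card.choose 2 : ℕ) : ℝ) * smI F Finset.univ 2 := by
  intro T
  induction T using Finset.induction_on with
  | empty => intro _; simp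
  | @insert x T hxT ih =>
    intro hsub
    have hxS : x ∈ S := hsub (by simp)
    have hTS : T ⊆ S := (Finset.subset_insert x T).trans hsub
    have hih := ih hTS
    have hxA : x ∉ (S \ T) \ {x} := by simp
    have hdAT : Disjoint ((S \ T) \ {x}) T := by
      rw [Finset.disjoint_left]; intro a ha hb
      simp only [Finset.mem_sdiff] at ha
      exact ha.1.2 hb
    have hm := marg_mono F x ((S \ T) \ {x}) T hxA hxT hdAT
    have e1 : ((S \ T) \ {x}) ∪ T = S \ {x} := by
      ext a
      simp only [Finset.mem_union, Finset.mem_sdiff, Finset.mem_singleton]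
      constructor
      · rintro (⟨⟨h1, _⟩, h3⟩ | h)
        · exact ⟨h1, h3⟩
        · exact ⟨hTS h, fun he => hxT (he ▸ h)⟩
      · intro ⟨h1, h2⟩
        by_cases ha : a ∈ T
        · right; exact ha
        · left; exact ⟨⟨h1, ha⟩, h2⟩
    have e2 : (((S \ T) \ {x}) ∪ T) ∪ {x} = S := by
      rw [e1]
      ext a
      simp only [Finset.mem_union, Finset.mem_sdiff, Finset.mem_singleton]
      constructor
      · rintro (⟨h, _⟩ | rfl)
        · exact h
        · exact hxS
      · intro h
        by_cases hax : a = x <;> tauto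
    have e3 : ((S \ T) \ {x}) ∪ {x} = S \ T := by
      ext a
      simp only [Finset.mem_union, Finset.mem_sdiff, Finset.mem_singleton]
      constructor
      · rintro (⟨h, _⟩ | rfl)
        · exact h
        · exact ⟨hxS, hxT⟩
      · intro ⟨h1, h2⟩
        by_cases hax : a = x <;> tauto
    rw [e2, e1, e3] at hm
    have hl := hloc x hxS
    have e4 : S \ insert x T = (S \ T) \ {x} := by ext a; simp <;> tauto
    rw [e4, Finset.card_insert_of_notMem hxT]
    have hch : (((T.card + 1).choose 2 : ℕ) : ℝ) = ((T.card.choose 2 : ℕ) : ℝ) + T.card := by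
      rw [Nat.choose_succ_succ, Nat.choose_one_right]; push_cast; ring
    rw [hch]
    linarith

/-- Approximation guarantee for local search on approximately submodular functions
(Theorem 1): if `F` is nonnegative, `C` maximizes `F` over all subsets of `V`, and
`S` is a local optimum of `F`, then `2 F(S) + F(V \ S) ≥ F(C) + ξ · λ_F(V, 2)` with
`ξ = C(|S \ C|, 2) + C(|C \ S|, 2) + |V \ (S ∪ C)| · |S| + |C \ S| · |S ∩ C|`. -/
theorem local_search_guarantee (F : Finset V → ℝ)
    (hF : ∀ A : Finset V, 0 ≤ F A)
    (C : Finset V) (hC : ∀ A : Finset V, F A ≤ F C)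
    (S : Finset V) (hS : IsLocalOptimum F S) :
    2 * F S + F (Finset.univ \ S) ≥
      F C + (((S \ C).card.choose 2 : ℝ) + ((C \ S).card.choose 2 : ℝ)
        + ((Finset.univ \ (S ∪ C)).card : ℝ) * (S.card : ℝ)
        + ((C \ S).card : ℝ) * ((S ∩ C).card : ℝ)) * smI F Finset.univ 2 := by
  obtain ⟨hrem, hadd⟩ := hS
  set l := smI F Finset.univ 2 with hl
  -- Claim A : F (S ∪ (C \ S)) ≤ F S - choose(|C\S|,2) l
  have hA : F (S ∪ C) ≤ F S - (((C \ S).card.choose 2 : ℕ) : ℝ) * l := by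
    have := claimA F S hadd (C \ S) (by
      rw [Finset.disjoint_right]; intro a ha; simp at ha; exact ha.2)
    have e : S ∪ (C \ S) = S ∪ C := by ext a; simp <;> tauto
    rwa [e] at this
  -- Claim B : F (S ∩ C) ≤ F S - choose(|S\C|,2) l
  have hB : F (S ∩ C) ≤ F S - (((S \ C).card.choose 2 : ℕ) : ℝ) * l := by
    have := claimB F S hrem (S \ C) (Finset.sdiff_subset)
    have e : S \ (S \ C) = S ∩ C := by ext a; simp <;> tauto
    rwa [e] at this
  -- Approximate submodularity (C1): X = S ∪ C, Y = univ \ S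
  have h1 := approx_submod F (S ∪ C) (Finset.univ \ S)
  have e11 : (S ∪ C) ∪ (Finset.univ \ S) = Finset.univ := by ext a; simp <;> tauto
  have e12 : (S ∪ C) ∩ (Finset.univ \ S) = C \ S := by ext a; simp <;> tauto
  have e13 : (S ∪ C) \ (Finset.univ \ S) = S := by ext a; simp <;> tauto
  have e14 : (Finset.univ \ S) \ (S ∪ C) = Finset.univ \ (S ∪ C) := by
    ext a; simp <;> tauto
  rw [e11, e12, e13, e14] at h1
  -- Approximate submodularity (C2): X = C \ S, Y = S ∩ C
  have h2 := approx_submod F (C \ S) (S ∩ C)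
  have e21 : (C \ S) ∪ (S ∩ C) = C := by ext a; simp <;> tauto
  have e22 : (C \ S) ∩ (S ∩ C) = ∅ := by ext a; simp <;> tauto
  have e23 : (C \ S) \ (S ∩ C) = C \ S := by ext a; simp <;> tauto
  have e24 : (S ∩ C) \ (C \ S) = S ∩ C := by ext a; simp <;> tauto
  rw [e21, e22, e23, e24] at h2
  have hV : 0 ≤ F Finset.univ := hF _
  have hE : 0 ≤ F (∅ : Finset V) := hF _
  have goal' : 2 * F S + F (Finset.univ \ S) ≥
      F C + (((S \ C).card.choose 2 : ℕ) : ℝ) * l + (((C \ S).card.choose 2 : ℕ) : ℝ) * l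
        + ((Finset.univ \ (S ∪ C)).card : ℝ) * (S.card : ℝ) * l
        + ((C \ S).card : ℝ) * ((S ∩ C).card : ℝ) * l := by
    nlinarith [h1, h2, hA, hB, hV, hE]
  push_cast at goal' ⊢
  nlinarith [goal']
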